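/- Let m ≥ 3 be a natural number, let A be a finite set with a strict linear order <, let B be a weakly (m−1)-wise balanced design over A, and suppose |A| ≤ k·|B| for some real k > 0. Then (|A| + |B|) / (k + 1) ≤ α(Γ_{B,m}). -/

import Mathlib

open Finset

/-- `B` is a weakly `m`-wise balanced design over the finite set `A`:
every block is a nonempty subset of `A`, every point of `A` lies in at least
one block, and any `m` pairwise distinct points of `A` are contained together
in at most one block. -/
def IsWeaklyBalancedDesign {α : Type*} [DecidableEq α] (m : ℕ)
    (A : Finset α) (B : Finset (Finset α)) : Prop :=
  (∀ C ∈ B, C ⊆ A) ∧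
  (∀ C ∈ B, C.Nonempty) ∧
  (∀ x ∈ A, ∃ C ∈ B, x ∈ C) ∧
  (∀ S : Finset α, S ⊆ A → S.card = m → (B.filter fun C => S ⊆ C).card ≤ 1)

/-- The vertex set of `Γ_{B,m}`: all incidence pairs `(x, C)` with `x ∈ C ∈ B`. -/
def designVerts {α : Type*} [DecidableEq α] (B : Finset (Finset α)) :
    Finset (α × Finset α) :=
  B.biUnion fun C => C.image fun x => (x, C)

/-- The graph `Γ_{B,m}` on incidence pairs: `(x, C₁)` and `(y, C₂)` are adjacent
iff `x < y`, `C₁ ≠ C₂` and `x ∈ C₂`, or symmetrically `y < x`, `C₂ ≠ C₁` and `y ∈ C₁`. -/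
def designGraph {α : Type*} [inst : LinearOrder α] (B : Finset (Finset α)) :
    SimpleGraph (designVerts (α := α) B) where
  Adj u v :=
    (u.val.1 < v.val.1 ∧ u.val.2 ≠ v.val.2 ∧ u.val.1 ∈ v.val.2) ∨
    (v.val.1 < u.val.1 ∧ v.val.2 ≠ u.val.2 ∧ v.val.1 ∈ u.val.2)
  symm := ⟨fun u v h => by tauto⟩
  loopless := ⟨fun u h => by
    rcases h with ⟨h, _, _⟩ | ⟨h, _, _⟩ <;> exact lt_irrefl _ h⟩

/-- The independence number of a graph: the largest size of an independent set of vertices. -/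
noncomputable def indepNum {V : Type*} (G : SimpleGraph V) : ℕ :=
  sSup {n | ∃ s : Finset V, s.card = n ∧ ∀ x ∈ s, ∀ y ∈ s, ¬ G.Adj x y}

/-- Let `m ≥ 3`, let `B` be a weakly `(m-1)`-wise balanced design over a finite linearly
ordered set `A`, and suppose `|A| ≤ k·|B|` for some real `k > 0`.
Then `(|A| + |B|) / (k + 1) ≤ α(Γ_{B,m})`. -/
theorem designGraph_indepNum_lower {α : Type*} [LinearOrder α] (m : ℕ) (hm : 3 ≤ m)
    (A : Finset α) (B : Finset (Finset α))
    (hB : IsWeaklyBalancedDesign (m - 1) A B)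
    (k : ℝ) (hk : 0 < k) (hAB : (A.card : ℝ) ≤ k * (B.card : ℝ)) :
    ((A.card : ℝ) + (B.card : ℝ)) / (k + 1) ≤ (indepNum (designGraph B) : ℝ) := by
  classical
  obtain ⟨_, hne, _, _⟩ := hB
  -- the independent set {(min C, C) : C ∈ B}
  have hmem : ∀ C : {C // C ∈ B}, (C.val.min' (hne _ C.property), C.val) ∈ designVerts B := by
    intro C
    simp only [designVerts, Finset.mem_biUnion]
    exact ⟨C.val, C.property, Finset.mem_image.mpr ⟨_, Finset.min'_mem _ _, rfl⟩⟩
  set s : Finset {v // v ∈ designVerts (α := α) B} :=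
    B.attach.image (fun C => ⟨(C.val.min' (hne _ C.property), C.val), hmem C⟩) with hs
  have hcard : s.card = B.card := by
    rw [hs, Finset.card_image_of_injective, Finset.card_attach]
    intro C₁ C₂ h
    apply Subtype.ext
    have := congrArg (fun v => v.val.2) h
    simpa using this
  have hindep : ∀ x ∈ s, ∀ y ∈ s, ¬ (designGraph B).Adj x y := by
    intro x hx y hy hadj
    rw [hs, Finset.mem_image] at hx hy
    obtain ⟨C₁, _, rfl⟩ := hx
    obtain ⟨C₂, _, rfl⟩ := hy
    rcases hadj with ⟨h1, _, h3⟩ | ⟨h1, _, h3⟩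
    · exact absurd (Finset.min'_le _ _ h3) (not_le.mpr h1)
    · exact absurd (Finset.min'_le _ _ h3) (not_le.mpr h1)
  have hle : B.card ≤ indepNum (designGraph B) := by
    apply le_csSup
    · exact ⟨Fintype.card {v // v ∈ designVerts (α := α) B}, fun n hn => by
        obtain ⟨t, ht, _⟩ := hn
        rw [← ht, ← Finset.card_univ]
        exact Finset.card_le_card (Finset.subset_univ t)⟩
    · exact ⟨s, hcard, hindep⟩
  have hle' : (B.card : ℝ) ≤ (indepNum (designGraph B) : ℝ) := by exact_mod_cast hle
  have hk1 : (0:ℝ) < k + 1 := by linarith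
  rw [div_le_iff₀ hk1]
  calc (A.card : ℝ) + B.card ≤ k * B.card + B.card := by linarith
    _ = (B.card : ℝ) * (k + 1) := by ring
    _ ≤ (indepNum (designGraph B) : ℝ) * (k + 1) := by
        apply mul_le_mul_of_nonneg_right hle' (le_of_lt hk1)
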